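/- Let (A,φ) be an F_p-algebra with Frobenius splitting and (f,c) ∈ W_2^φ(A) a lift of f ∈ A. Then the natural homomorphism from the localization W_2^φ(A)_{(f,c)} to W_2^φ(A_f) is an isomorphism. -/

import Mathlib

/-- A type-level copy of `A × A`, the underlying set of twisted Witt vectors. -/
structure WittPair (A : Type*) where
  fst : A
  snd : A

/-- The value in `A` of the integral polynomial `P(a,b) = ((a+b)^p − a^p − b^p)/p`,
written via binomial coefficients: `P(a,b) = Σ_{0<i<p} (C(p,i)/p) a^i b^{p-i}`. -/
def wittP (p : ℕ) {A : Type*} [CommRing A] (a b : A) : A :=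
  ∑ i ∈ Finset.Ioo 0 p, ((p.choose i / p : ℕ) : A) * a ^ i * b ^ (p - i)

/-- `inst` is the twisted Witt ring structure `W₂^φ(A)` on `A × A`. -/
def IsTwistedWittRing {A : Type*} [CommRing A] (p : ℕ) (φ : A → A)
    (inst : CommRing (WittPair A)) : Prop :=
  letI := inst
  (∀ x y : WittPair A,
      x + y = ⟨x.fst + y.fst, x.snd + y.snd - φ (wittP p x.fst y.fst)⟩) ∧
  (∀ x y : WittPair A,
      x * y = ⟨x.fst * y.fst, x.fst * y.snd + y.fst * x.snd⟩) ∧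
  (1 : WittPair A) = ⟨1, 0⟩

theorem WittPair.ext' {A : Type*} {x y : WittPair A}
    (h0 : x.fst = y.fst) (h1 : x.snd = y.snd) : x = y := by
  cases x; cases y; cases h0; cases h1; rfl

theorem map_wittP {A B : Type*} [CommRing A] [CommRing B] (g : A →+* B) (p : ℕ) (a b : A) :
    g (wittP p a b) = wittP p (g a) (g b) := by
  simp [wittP, map_sum]

/-- Generic form of the localization statement: if `ι : A →+* B` exhibits `B` as the
localization of `A` away from `f` (expressed elementwise), and `φ, φ'` are compatible maps,
then the twisted Witt ring of `B` is the localization of the twisted Witt ring of `A`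
at `(f, c)`. -/
theorem wittLoc_aux (p : ℕ) {A B : Type*} [CommRing A] [CommRing B]
    (φ : A → A) (φ' : B → B) (ι : A →+* B)
    (hcompat : ∀ a : A, φ' (ι a) = ι (φ a))
    (f c : A)
    (instA : CommRing (WittPair A)) (hA : IsTwistedWittRing p φ instA)
    (instB : CommRing (WittPair B)) (hB : IsTwistedWittRing p φ' instB)
    (hfunit : IsUnit (ι f))
    (hsurj : ∀ z : B, ∃ (n : ℕ) (a : A), z * ι f ^ n = ι a)
    (heq : ∀ x y : A, ι x = ι y → ∃ m : ℕ, f ^ m * x = f ^ m * y) :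
    letI := instA
    letI := instB
    ∃ e : Localization.Away (⟨f, c⟩ : WittPair A) ≃+* WittPair B,
      ∀ x : WittPair A,
        e (algebraMap (WittPair A) (Localization.Away (⟨f, c⟩ : WittPair A)) x) =
          ⟨ι x.fst, ι x.snd⟩ := by
  letI := instA
  letI := instB
  obtain ⟨hadd, hmul, hone⟩ := hA
  obtain ⟨hadd', hmul', hone'⟩ := hB
  -- the candidate map
  have hF1 : (⟨ι (1 : WittPair A).fst, ι (1 : WittPair A).snd⟩ : WittPair B) = 1 := by
    rw [hone, hone']
    exact WittPair.ext' (map_one ι) (map_zero ι)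
  have hFmul : ∀ x y : WittPair A,
      (⟨ι (x * y).fst, ι (x * y).snd⟩ : WittPair B) =
        (⟨ι x.fst, ι x.snd⟩ : WittPair B) * ⟨ι y.fst, ι y.snd⟩ := by
    intro x y
    rw [hmul x y, hmul' ⟨ι x.fst, ι x.snd⟩ ⟨ι y.fst, ι y.snd⟩]
    refine WittPair.ext' (map_mul ι _ _) ?_
    show ι (x.fst * y.snd + y.fst * x.snd) = ι x.fst * ι y.snd + ι y.fst * ι x.snd
    rw [map_add, map_mul, map_mul]
  have hFadd : ∀ x y : WittPair A,
      (⟨ι (x + y).fst, ι (x + y).snd⟩ : WittPair B) =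
        (⟨ι x.fst, ι x.snd⟩ : WittPair B) + ⟨ι y.fst, ι y.snd⟩ := by
    intro x y
    rw [hadd x y, hadd' ⟨ι x.fst, ι x.snd⟩ ⟨ι y.fst, ι y.snd⟩]
    refine WittPair.ext' (map_add ι _ _) ?_
    show ι (x.snd + y.snd - φ (wittP p x.fst y.fst)) =
      ι x.snd + ι y.snd - φ' (wittP p (ι x.fst) (ι y.fst))
    rw [map_sub, map_add, ← map_wittP ι p, hcompat]
  let ψ₀ : WittPair A →* WittPair B :=
    { toFun := fun x => ⟨ι x.fst, ι x.snd⟩, map_one' := hF1, map_mul' := hFmul }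
  let ψ : WittPair A →+* WittPair B := RingHom.mk' ψ₀ hFadd
  have hψ : ∀ x : WittPair A, ψ x = ⟨ι x.fst, ι x.snd⟩ := fun x => rfl
  -- powers of (f, c)
  have hpow : ∀ n : ℕ,
      (⟨f, c⟩ : WittPair A) ^ (n + 1) = ⟨f ^ (n + 1), ((n : A) + 1) * f ^ n * c⟩ := by
    intro n
    induction n with
    | zero =>
      rw [pow_one]
      refine WittPair.ext' (by simp) (by push_cast; simp)
    | succ n ih =>
      rw [pow_succ, ih, hmul]
      simp only [WittPair.mk.injEq]
      refine ⟨by ring, ?_⟩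
      push_cast
      ring
  -- units in the Witt ring of B
  have hunit : ∀ (u v : B), IsUnit u → IsUnit (⟨u, v⟩ : WittPair B) := by
    intro u v hu
    obtain ⟨b, hb⟩ := hu.exists_right_inv
    refine IsUnit.of_mul_eq_one ⟨b, -(b * b * v)⟩ ?_
    rw [hmul', hone']
    refine WittPair.ext' hb ?_
    show u * -(b * b * v) + b * v = 0
    linear_combination (-(b * v)) * hb
  -- the localization structure
  letI : Algebra (WittPair A) (WittPair B) := ψ.toAlgebra
  have halg : ∀ x : WittPair A, algebraMap (WittPair A) (WittPair B) x = ⟨ι x.fst, ι x.snd⟩ :=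
    fun x => rfl
  haveI hloc : IsLocalization (Submonoid.powers (⟨f, c⟩ : WittPair A)) (WittPair B) := by
    constructor; constructor
    · rintro ⟨s, n, rfl⟩
      show IsUnit (ψ ((⟨f, c⟩ : WittPair A) ^ n))
      rw [map_pow]
      exact ((hunit (ι f) (ι c) hfunit).pow n)
    · rintro ⟨u, v⟩
      obtain ⟨n₁, a, ha⟩ := hsurj u
      obtain ⟨n₂, b, hb⟩ := hsurj v
      refine ⟨⟨⟨a * f ^ (n₂ + 1),
        a * (((n₁ + n₂ : ℕ) : A) + 1) * f ^ n₂ * c + b * f ^ (n₁ + 1)⟩,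
        ⟨(⟨f, c⟩ : WittPair A) ^ (n₁ + n₂ + 1), n₁ + n₂ + 1, rfl⟩⟩, ?_⟩
      show (⟨u, v⟩ : WittPair B) * ψ ((⟨f, c⟩ : WittPair A) ^ (n₁ + n₂ + 1)) =
        ψ ⟨a * f ^ (n₂ + 1),
          a * (((n₁ + n₂ : ℕ) : A) + 1) * f ^ n₂ * c + b * f ^ (n₁ + 1)⟩
      rw [hpow (n₁ + n₂), hψ, hψ, hmul']
      refine WittPair.ext' ?_ ?_
      · show u * ι (f ^ (n₁ + n₂ + 1)) = ι (a * f ^ (n₂ + 1))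
        rw [map_pow, map_mul, map_pow]
        linear_combination (ι f) ^ (n₂ + 1) * ha
      · show u * ι ((((n₁ + n₂ : ℕ) : A) + 1) * f ^ (n₁ + n₂) * c) + ι (f ^ (n₁ + n₂ + 1)) * v =
          ι (a * (((n₁ + n₂ : ℕ) : A) + 1) * f ^ n₂ * c + b * f ^ (n₁ + 1))
        simp only [map_add, map_mul, map_pow, map_natCast, map_one]
        push_cast
        linear_combination (((n₁ : B) + n₂ + 1) * (ι f) ^ n₂ * ι c) * ha +
          (ι f) ^ (n₁ + 1) * hb
    · intro x y hxy
      rw [halg, halg] at hxy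
      have h0 : ι x.fst = ι y.fst := congrArg WittPair.fst hxy
      have h1 : ι x.snd = ι y.snd := congrArg WittPair.snd hxy
      obtain ⟨m₁, hm₁⟩ := heq _ _ h0
      obtain ⟨m₂, hm₂⟩ := heq _ _ h1
      refine ⟨⟨(⟨f, c⟩ : WittPair A) ^ (m₁ + m₂ + 1), m₁ + m₂ + 1, rfl⟩, ?_⟩
      show (⟨f, c⟩ : WittPair A) ^ (m₁ + m₂ + 1) * x = (⟨f, c⟩ : WittPair A) ^ (m₁ + m₂ + 1) * y
      rw [hpow (m₁ + m₂), hmul, hmul]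
      refine WittPair.ext' ?_ ?_
      · show f ^ (m₁ + m₂ + 1) * x.fst = f ^ (m₁ + m₂ + 1) * y.fst
        linear_combination f ^ (m₂ + 1) * hm₁
      · show f ^ (m₁ + m₂ + 1) * x.snd + x.fst * ((((m₁ + m₂ : ℕ) : A) + 1) * f ^ (m₁ + m₂) * c) =
          f ^ (m₁ + m₂ + 1) * y.snd + y.fst * ((((m₁ + m₂ : ℕ) : A) + 1) * f ^ (m₁ + m₂) * c)
        push_cast
        linear_combination f ^ (m₁ + 1) * hm₂ + (((m₁ : A) + m₂ + 1) * f ^ m₂ * c) * hm₁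
  have E := IsLocalization.algEquiv (Submonoid.powers (⟨f, c⟩ : WittPair A))
    (Localization.Away (⟨f, c⟩ : WittPair A)) (WittPair B)
  refine ⟨RingEquiv.mk E.toEquiv (fun a b => map_mul E a b) (fun a b => map_add E a b),
    fun x => ?_⟩
  exact E.commutes x

/-- Localization of the twisted Witt ring: for a lift `(f,c) ∈ W₂^φ(A)` of `f ∈ A`,
the natural homomorphism `W₂^φ(A)_{(f,c)} → W₂^{φ'}(A_f)` (where `φ'` is the
induced splitting of `A_f`) is an isomorphism. -/
theorem twistedWittRing_localization_iso
    (p : ℕ) (hp : p.Prime) (A : Type*) [CommRing A] [CharP A p]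
    (φ : A → A) (haddφ : ∀ a b : A, φ (a + b) = φ a + φ b)
    (hsemilinear : ∀ a b : A, φ (a ^ p * b) = a * φ b)
    (hsplit : ∀ a : A, φ (a ^ p) = a)
    (f c : A)
    (inst : CommRing (WittPair A)) (hinst : IsTwistedWittRing p φ inst)
    (φ' : Localization.Away f → Localization.Away f)
    (haddφ' : ∀ a b : Localization.Away f, φ' (a + b) = φ' a + φ' b)
    (hsemilinear' : ∀ a b : Localization.Away f, φ' (a ^ p * b) = a * φ' b)
    (hsplit' : ∀ a : Localization.Away f, φ' (a ^ p) = a)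
    (hcompat : ∀ a : A,
      φ' (algebraMap A (Localization.Away f) a) = algebraMap A (Localization.Away f) (φ a))
    (inst' : CommRing (WittPair (Localization.Away f)))
    (hinst' : IsTwistedWittRing p φ' inst') :
    letI := inst
    letI := inst'
    ∃ e : Localization.Away (⟨f, c⟩ : WittPair A) ≃+* WittPair (Localization.Away f),
      ∀ x : WittPair A,
        e (algebraMap (WittPair A) (Localization.Away (⟨f, c⟩ : WittPair A)) x) =
          ⟨algebraMap A (Localization.Away f) x.fst,
            algebraMap A (Localization.Away f) x.snd⟩ := by
  have hfunit : IsUnit (algebraMap A (Localization.Away f) f) :=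
    IsLocalization.Away.algebraMap_isUnit f
  have hsurj : ∀ z : Localization.Away f,
      ∃ (n : ℕ) (a : A), z * algebraMap A (Localization.Away f) f ^ n =
        algebraMap A (Localization.Away f) a := by
    intro z
    obtain ⟨⟨a, s⟩, ha⟩ := IsLocalization.surj (M := Submonoid.powers f) z
    obtain ⟨n, hn⟩ := s.prop
    have hn' : f ^ n = (s : A) := hn
    exact ⟨n, a, by rw [← map_pow, hn']; exact ha⟩
  have heq : ∀ x y : A,
      algebraMap A (Localization.Away f) x = algebraMap A (Localization.Away f) y →
      ∃ m : ℕ, f ^ m * x = f ^ m * y := by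
    intro x y h
    obtain ⟨s, hs⟩ := IsLocalization.exists_of_eq (M := Submonoid.powers f) h
    obtain ⟨m, hm⟩ := s.prop
    have hm' : f ^ m = (s : A) := hm
    exact ⟨m, by rw [hm']; exact hs⟩
  exact wittLoc_aux p φ φ' (algebraMap A (Localization.Away f)) hcompat f c
    inst hinst inst' hinst' hfunit hsurj heq
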